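/- Let K = {x ∈ ℝⁿ : gᵢ(x) ≤ 0 for all i ∈ [m], hⱼ(x) = 0 for all j ∈ [ℓ]}, where each gᵢ is a convex polynomial function and each hⱼ is an affine function. Let p, q : ℝⁿ → ℝ be polynomials with q(x) > 0 on K, and let f = p/q. Assume the Abadie constraint qualification holds at every point of K, and assume that for every index set α ⊆ [m], the Jacobian matrix DΨ_α(x, λ_α) has rank n + |α| + ℓ at every point (x, λ_α) ∈ ℝⁿ × ℝ^{|α|}. Then the set Stat(K, f) of stationary points of the fractional optimization problem 'minimize f(x) subject to x ∈ K' has finitely many points. -/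

import Mathlib

open Filter Topology

/-- The Bouligand–Severi tangent cone of `K` at `x`. -/
def bouligandTangentCone {n : ℕ} (K : Set (Fin n → ℝ)) (x : Fin n → ℝ) :
    Set (Fin n → ℝ) :=
  {v | ∃ (y : ℕ → Fin n → ℝ) (t : ℕ → ℝ), (∀ k, y k ∈ K) ∧ (∀ k, 0 < t k) ∧
    Tendsto y atTop (nhds x) ∧ Tendsto t atTop (nhds 0) ∧
    Tendsto (fun k => (t k)⁻¹ • (y k - x)) atTop (nhds v)}

/-- The gradient of `f : ℝⁿ → ℝ` at `x`: the vector of partial derivatives. -/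
noncomputable def grad {n : ℕ} (f : (Fin n → ℝ) → ℝ) (x : Fin n → ℝ) : Fin n → ℝ :=
  fun j => fderiv ℝ f x (Pi.single j 1)

/-- The Hessian matrix of `f : ℝⁿ → ℝ` at `x`. -/
noncomputable def hess {n : ℕ} (f : (Fin n → ℝ) → ℝ) (x : Fin n → ℝ) :
    Matrix (Fin n) (Fin n) ℝ :=
  Matrix.of fun a b => fderiv ℝ (fun y => grad f y a) x (Pi.single b 1)

/-- The Jacobian matrix of a map `F : ℝⁿ → ℝⁿ` at `x`. -/
noncomputable def jac {n : ℕ} (F : (Fin n → ℝ) → (Fin n → ℝ)) (x : Fin n → ℝ) :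
    Matrix (Fin n) (Fin n) ℝ :=
  Matrix.of fun a b => fderiv ℝ (fun y => F y a) x (Pi.single b 1)

/-- The linearization cone of the constraint system `(g, h)` at `x`. -/
def linCone {n m l : ℕ} (g : Fin m → (Fin n → ℝ) → ℝ)
    (h : Fin l → ((Fin n → ℝ) →ᵃ[ℝ] ℝ)) (x : Fin n → ℝ) : Set (Fin n → ℝ) :=
  {v | (∀ i, g i x = 0 → ∑ j, grad (g i) x j * v j ≤ 0) ∧
       ∀ j', ∑ j, grad (h j') x j * v j = 0}

/-- The polynomial map `q∇p - p∇q : ℝⁿ → ℝⁿ`. -/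
noncomputable def fracMap {n : ℕ} (p q : (Fin n → ℝ) → ℝ) :
    (Fin n → ℝ) → (Fin n → ℝ) :=
  fun x i => q x * grad p x i - p x * grad q x i

/-- The Jacobian `DΨ_α(x, λ_α)` of the KKT map `Ψ_α` of the fractional problem:
the square block matrix
`[[Q(x) + Σ_{i∈α} λᵢ ∇²gᵢ(x), ∇g_α(x), ∇h(x)], [∇g_α(x)ᵀ, 0, 0], [∇h(x)ᵀ, 0, 0]]`
of size `n + |α| + ℓ`, where `Q(x)` is the Jacobian of `q∇p - p∇q` at `x`. -/
noncomputable def DPsi {n m l : ℕ} (p q : (Fin n → ℝ) → ℝ)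
    (g : Fin m → (Fin n → ℝ) → ℝ) (h : Fin l → ((Fin n → ℝ) →ᵃ[ℝ] ℝ))
    (α : Finset (Fin m)) (x : Fin n → ℝ) (lam : {i // i ∈ α} → ℝ) :
    Matrix (Fin n ⊕ ({i // i ∈ α} ⊕ Fin l)) (Fin n ⊕ ({i // i ∈ α} ⊕ Fin l)) ℝ :=
  Matrix.of fun r c =>
    match r, c with
    | Sum.inl a, Sum.inl b =>
        jac (fracMap p q) x a b + ∑ i : {i // i ∈ α}, lam i * hess (g i) x a b
    | Sum.inl a, Sum.inr (Sum.inl i) => grad (g i) x a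
    | Sum.inl a, Sum.inr (Sum.inr j) => grad (h j) x a
    | Sum.inr (Sum.inl i), Sum.inl b => grad (g i) x b
    | Sum.inr (Sum.inr j), Sum.inl b => grad (h j) x b
    | Sum.inr _, Sum.inr _ => 0

namespace StatAux

open MvPolynomial Matrix

theorem hasFDerivAt_eval {N : ℕ} (x : Fin N → ℝ) (P : MvPolynomial (Fin N) ℝ) :
    HasFDerivAt (fun y : Fin N → ℝ => eval y P)
      (∑ j, eval x (pderiv j P) • ContinuousLinearMap.proj (R := ℝ) (φ := fun _ : Fin N => ℝ) j)
      x := by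
  induction P using MvPolynomial.induction_on with
  | C a =>
      simp only [eval_C, pderiv_C, map_zero, zero_smul, Finset.sum_const_zero]
      exact hasFDerivAt_const a x
  | add p q hp hq =>
      have := hp.add hq
      refine (this.congr_of_eventuallyEq (Filter.Eventually.of_forall fun y => ?_)).congr_fderiv (Eq.symm ?_)
      · simp
      · simp [map_add, add_smul, Finset.sum_add_distrib]
  | mul_X p i hp =>
      have hXi : HasFDerivAt (fun y : Fin N → ℝ => y i)
          (ContinuousLinearMap.proj (R := ℝ) (φ := fun _ : Fin N => ℝ) i) x :=
        hasFDerivAt_apply i x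
      have := hp.mul hXi
      refine (this.congr_of_eventuallyEq (Filter.Eventually.of_forall fun y => ?_)).congr_fderiv (Eq.symm ?_)
      · simp
      · have key : ∀ j, eval x (pderiv j (p * X i)) =
            eval x (pderiv j p) * x i + (if j = i then eval x p else 0) := by
          intro j
          rw [pderiv_mul]
          by_cases hji : j = i
          · subst hji; simp
          · simp [pderiv_X, Pi.single_apply, hji, Ne.symm hji]
        ext v
        simp only [ContinuousLinearMap.coe_sum', Finset.sum_apply,
          ContinuousLinearMap.smul_apply, ContinuousLinearMap.proj_apply, smul_eq_mul,
          ContinuousLinearMap.add_apply, key, add_mul, ite_mul, zero_mul,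
          Finset.sum_add_distrib, Finset.sum_ite_eq', Finset.mem_univ, if_true, Finset.mul_sum]
        rw [add_comm]
        congr 1
        exact Finset.sum_congr rfl fun j _ => by ring

theorem grad_eval {N : ℕ} (P : MvPolynomial (Fin N) ℝ) (x : Fin N → ℝ) (j : Fin N) :
    grad (fun y => eval y P) x j = eval x (pderiv j P) := by
  unfold grad
  rw [(hasFDerivAt_eval x P).fderiv]
  simp [Pi.single_apply]

theorem grad_affine {n : ℕ} (h : (Fin n → ℝ) →ᵃ[ℝ] ℝ) (x : Fin n → ℝ) (a : Fin n) :
    grad (⇑h) x a = h.linear (Pi.single a 1) := by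
  unfold grad
  have heq : ⇑h = fun y => h.linear y + h 0 := by
    funext y; exact congrFun h.decomp y
  have hd : HasFDerivAt (⇑h) (LinearMap.toContinuousLinearMap h.linear) x := by
    rw [heq]
    exact (LinearMap.toContinuousLinearMap h.linear).hasFDerivAt.add_const (h 0)
  rw [hd.fderiv]; rfl

theorem pderiv_rename_ne {σ τ : Type*} [DecidableEq τ] (f : σ → τ) (y : τ)
    (hy : ∀ s, f s ≠ y) (P : MvPolynomial σ ℝ) : pderiv y (rename f P) = 0 := by
  induction P using MvPolynomial.induction_on with
  | C a => simp
  | add p q hp hq => simp [hp, hq]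
  | mul_X p i hp =>
      rw [_root_.map_mul, pderiv_mul, rename_X, hp, pderiv_X_of_ne (hy i)]
      simp

theorem mem_span_of_dot {n : ℕ} {ι : Type*} [Fintype ι] (F : Fin n → ℝ) (u : ι → Fin n → ℝ)
    (hF : ∀ v : Fin n → ℝ, (∀ s, ∑ j, u s j * v j = 0) → ∑ j, F j * v j = 0) :
    ∃ c : ι → ℝ, ∑ s, c s • u s = F := by
  by_contra hc
  have hFU : F ∉ Submodule.span ℝ (Set.range u) := by
    intro hmem
    rw [Submodule.mem_span_range_iff_exists_fun] at hmem
    exact hc hmem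
  obtain ⟨φ, hφF, hφU⟩ := Submodule.exists_dual_map_eq_bot_of_notMem hFU inferInstance
  set w : Fin n → ℝ := fun j => φ (fun j' => if j = j' then 1 else 0) with hw
  have hφ_eq : ∀ v : Fin n → ℝ, φ v = ∑ j, v j * w j := by
    intro v
    rw [LinearMap.pi_apply_eq_sum_univ φ v]
    simp [hw, smul_eq_mul]
  have hwzero : ∀ s, ∑ j, u s j * w j = 0 := by
    intro s
    rw [← hφ_eq]
    have hm : φ (u s) ∈ Submodule.map φ (Submodule.span ℝ (Set.range u)) :=
      Submodule.mem_map_of_mem (Submodule.subset_span ⟨s, rfl⟩)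
    rw [hφU] at hm
    simpa using hm
  have h0 := hF w hwzero
  rw [← hφ_eq] at h0
  exact hφF h0

theorem taylor_mem {σ : Type*} [Fintype σ] [DecidableEq σ] (z : σ → ℝ)
    (f : MvPolynomial σ ℝ) :
    f - C (eval z f) - ∑ b, C (eval z (pderiv b f)) * (X b - C (z b)) ∈
      Ideal.span (Set.range fun b : σ => (X b - C (z b) : MvPolynomial σ ℝ)) *
      Ideal.span (Set.range fun b : σ => (X b - C (z b) : MvPolynomial σ ℝ)) := by
  set J : Ideal (MvPolynomial σ ℝ) :=
    Ideal.span (Set.range fun b : σ => (X b - C (z b) : MvPolynomial σ ℝ)) with hJ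
  have hgen : ∀ b : σ, (X b - C (z b) : MvPolynomial σ ℝ) ∈ J :=
    fun b => Ideal.subset_span ⟨b, rfl⟩
  have hLmem : ∀ f : MvPolynomial σ ℝ,
      (∑ b, C (eval z (pderiv b f)) * (X b - C (z b))) ∈ J := by
    intro f
    exact Ideal.sum_mem _ fun b _ => Ideal.mul_mem_left _ _ (hgen b)
  induction f using MvPolynomial.induction_on with
  | C a => simp
  | add p q hp hq =>
      have heq : p + q - C (eval z (p + q)) -
            ∑ b, C (eval z (pderiv b (p + q))) * (X b - C (z b)) =
          (p - C (eval z p) - ∑ b, C (eval z (pderiv b p)) * (X b - C (z b))) +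
          (q - C (eval z q) - ∑ b, C (eval z (pderiv b q)) * (X b - C (z b))) := by
        simp only [map_add, add_mul, Finset.sum_add_distrib]
        ring
      rw [heq]
      exact Ideal.add_mem _ hp hq
  | mul_X p i hp =>
      have hL : (∑ b, C (eval z (pderiv b (p * X i))) * (X b - C (z b))) =
          C (z i) * (∑ b, C (eval z (pderiv b p)) * (X b - C (z b)))
            + C (eval z p) * (X i - C (z i)) := by
        have hterm : ∀ b : σ, C (eval z (pderiv b (p * X i))) * (X b - C (z b)) =
            C (z i) * (C (eval z (pderiv b p)) * (X b - C (z b)))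
              + (if b = i then C (eval z p) * (X b - C (z b)) else 0) := by
          intro b
          rw [pderiv_mul]
          by_cases hbi : b = i
          · subst hbi; simp [map_add, _root_.map_mul]; ring
          · simp [pderiv_X_of_ne (Ne.symm hbi), hbi, _root_.map_mul]; ring
        rw [Finset.sum_congr rfl fun b _ => hterm b]
        rw [Finset.sum_add_distrib, Finset.sum_ite_eq' Finset.univ i
          (fun b => C (eval z p) * (X b - C (z b)))]
        simp [Finset.mul_sum]
      have key : p * X i - C (eval z (p * X i)) -
            ∑ b, C (eval z (pderiv b (p * X i))) * (X b - C (z b)) =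
          C (z i) * (p - C (eval z p) - ∑ b, C (eval z (pderiv b p)) * (X b - C (z b)))
            + ((∑ b, C (eval z (pderiv b p)) * (X b - C (z b))) +
                (p - C (eval z p) - ∑ b, C (eval z (pderiv b p)) * (X b - C (z b))))
              * (X i - C (z i)) := by
        rw [hL]
        simp only [eval_mul, eval_X, _root_.map_mul]
        ring
      rw [key]
      refine Ideal.add_mem _ (Ideal.mul_mem_left _ _ hp) ?_
      refine Ideal.mul_mem_mul ?_ (hgen i)
      exact Ideal.add_mem _ (hLmem p) (Ideal.mul_le_left (I := J) (J := J) hp)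

theorem exists_transpose_mulVec {σ : Type*} [Fintype σ] [DecidableEq σ] (J : Matrix σ σ ℝ)
    (hJ : J.rank = Fintype.card σ) (w : σ → ℝ) : ∃ k, J.transpose.mulVec k = w := by
  have h2 : J.transpose.rank = Fintype.card σ := by rw [Matrix.rank_transpose]; exact hJ
  have htop : LinearMap.range J.transpose.mulVecLin = ⊤ := by
    apply Submodule.eq_top_of_finrank_eq
    rw [← Matrix.rank, h2, Module.finrank_pi]
  have hmem := htop ▸ Submodule.mem_top (x := w)
  obtain ⟨k, hk⟩ := hmem
  exact ⟨k, hk⟩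

theorem finite_zeros {σ : Type*} [Fintype σ] [DecidableEq σ] (P : σ → MvPolynomial σ ℝ)
    (hJ : ∀ z : σ → ℝ, (∀ a, eval z (P a) = 0) →
      (Matrix.of fun a b => eval z (pderiv b (P a))).rank = Fintype.card σ) :
    {z : σ → ℝ | ∀ a, eval z (P a) = 0}.Finite := by
  classical
  set I : Ideal (MvPolynomial σ ℝ) := Ideal.span (Set.range P) with hI
  have key : ∀ z : σ → ℝ, (∀ a, eval z (P a) = 0) →
      RingHom.ker (eval z) ∈ I.minimalPrimes := by
    intro z hz
    set m : Ideal (MvPolynomial σ ℝ) := RingHom.ker (eval z) with hm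
    have hprime : m.IsPrime := RingHom.ker_isPrime _
    have hmne : m ≠ ⊤ := hprime.ne_top
    have hIm : I ≤ m := by
      rw [hI, Ideal.span_le]
      rintro _ ⟨a, rfl⟩
      simp only [SetLike.mem_coe, RingHom.mem_ker]
      exact hz a
    set Jid : Ideal (MvPolynomial σ ℝ) :=
      Ideal.span (Set.range fun b : σ => (X b - C (z b))) with hJid
    have hJm : Jid ≤ m := by
      rw [hJid, Ideal.span_le]
      rintro _ ⟨b, rfl⟩
      simp only [SetLike.mem_coe, hm, RingHom.mem_ker, map_sub, eval_X, eval_C, sub_self]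
    have hXmem : ∀ b : σ, (X b - C (z b) : MvPolynomial σ ℝ) ∈ I ⊔ Jid * Jid := by
      intro b
      obtain ⟨k, hk⟩ := exists_transpose_mulVec
        (Matrix.of fun a b => eval z (pderiv b (P a))) (hJ z hz) (Pi.single b 1)
      have hsum_mem : (∑ a, C (k a) * P a) ∈ I :=
        Ideal.sum_mem _ fun a _ => Ideal.mul_mem_left _ _ (Ideal.subset_span ⟨a, rfl⟩)
      have hE_mem : (∑ a, C (k a) * (P a - C (eval z (P a)) -
          ∑ b', C (eval z (pderiv b' (P a))) * (X b' - C (z b')))) ∈ Jid * Jid :=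
        Ideal.sum_mem _ fun a _ => Ideal.mul_mem_left _ _ (taylor_mem z (P a))
      have hcalc : (X b - C (z b) : MvPolynomial σ ℝ) =
          (∑ a, C (k a) * P a) - (∑ a, C (k a) * (P a - C (eval z (P a)) -
            ∑ b', C (eval z (pderiv b' (P a))) * (X b' - C (z b')))) := by
        rw [← Finset.sum_sub_distrib]
        have hterm : ∀ a : σ, C (k a) * P a - C (k a) * (P a - C (eval z (P a)) -
            ∑ b', C (eval z (pderiv b' (P a))) * (X b' - C (z b'))) =
            ∑ b', C (k a) * C (eval z (pderiv b' (P a))) * (X b' - C (z b')) := by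
          intro a
          rw [hz a, map_zero, sub_zero, mul_sub, Finset.mul_sum, sub_sub_cancel]
          exact Finset.sum_congr rfl fun b' _ => by ring
        rw [Finset.sum_congr rfl fun a _ => hterm a, Finset.sum_comm]
        have hcol : ∀ b' : σ, (∑ a, C (k a) * C (eval z (pderiv b' (P a))) * (X b' - C (z b')))
            = C (Pi.single (M := fun _ => ℝ) b 1 b') * (X b' - C (z b')) := by
          intro b'
          rw [← Finset.sum_mul, ← hk]
          congr 1
          simp only [← _root_.map_mul]
          rw [← map_sum]
          congr 1
          simp [Matrix.mulVec, dotProduct, Matrix.transpose_apply, mul_comm]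
        rw [Finset.sum_congr rfl fun b' _ => hcol b']
        rw [Finset.sum_eq_single b (fun b' _ hb' => by
          simp [Pi.single_eq_of_ne hb'] ) (fun hb => absurd (Finset.mem_univ b) hb)]
        simp
      rw [hcalc]
      exact Submodule.sub_mem _ (Ideal.mem_sup_left hsum_mem) (Ideal.mem_sup_right hE_mem)
    have hmle : m ≤ I ⊔ Jid * Jid := by
      intro f hf
      have hfz : eval z f = 0 := hf
      have hdecomp : f = (f - C (eval z f) -
          ∑ b, C (eval z (pderiv b f)) * (X b - C (z b)))
          + ∑ b, C (eval z (pderiv b f)) * (X b - C (z b)) := by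
        rw [hfz]; simp
      rw [hdecomp]
      exact Submodule.add_mem _ (Ideal.mem_sup_right (taylor_mem z f))
        (Ideal.sum_mem _ fun b _ => Ideal.mul_mem_left _ _ (hXmem b))
    haveI := hprime
    obtain ⟨pmin, hpmin, hple⟩ := Ideal.exists_minimalPrimes_le (I := I) (J := m) hIm
    haveI hpprime : pmin.IsPrime := hpmin.1.1
    have hIpmin : I ≤ pmin := hpmin.1.2
    have hmp : m ≤ pmin ⊔ m * m :=
      le_trans hmle (sup_le_sup hIpmin (Ideal.mul_mono hJm hJm))
    set π := Ideal.Quotient.mk pmin with hπ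
    have hbar : m.map π ≤ (m.map π) * (m.map π) := by
      have h1 := Ideal.map_mono (f := π) hmp
      rwa [Ideal.map_sup, Ideal.map_mul, Ideal.map_quotient_self, bot_sup_eq] at h1
    have hfg : (m.map π).FG := IsNoetherian.noetherian _
    obtain ⟨r, hr, hrr⟩ := Submodule.exists_mem_and_smul_eq_self_of_fg_of_le_smul
      (m.map π) (m.map π) hfg (by rwa [Ideal.smul_eq_mul])
    have hmapne : m.map π ≠ ⊤ := by
      intro htop
      have hcomap : Ideal.comap π (m.map π) = m ⊔ RingHom.ker π :=
        Ideal.comap_map_of_surjective π Ideal.Quotient.mk_surjective m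
      rw [htop, Ideal.comap_top] at hcomap
      rw [Ideal.mk_ker, sup_eq_left.mpr hple] at hcomap
      exact hmne hcomap.symm
    have hmapbot : m.map π = ⊥ := by
      rw [Submodule.eq_bot_iff]
      intro u hu
      have hsmul := hrr u hu
      have hru : (r - 1) * u = 0 := by
        rw [sub_mul, one_mul, sub_eq_zero]
        simpa [smul_eq_mul] using hsmul
      rcases mul_eq_zero.mp hru with h0 | h0
      · exfalso
        apply hmapne
        rw [Ideal.eq_top_iff_one]
        have hr1 : r = 1 := by rwa [sub_eq_zero] at h0
        rwa [hr1] at hr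
      · exact h0
    have hmple : m ≤ pmin := by
      rw [Ideal.map_eq_bot_iff_le_ker, Ideal.mk_ker] at hmapbot
      exact hmapbot
    have hmeq : m = pmin := le_antisymm hmple hple
    rw [hmeq]
    exact hpmin
  have fin : I.minimalPrimes.Finite := by
    rw [Ideal.minimalPrimes_eq_comap]
    exact (minimalPrimes.finite_of_isNoetherianRing _).image _
  apply Set.Finite.of_finite_image (f := fun z => RingHom.ker (eval z))
  · apply fin.subset
    rintro _ ⟨z, hz, rfl⟩
    exact key z hz
  · intro z1 h1 z2 h2 heq
    have heq' : RingHom.ker (eval z1) = RingHom.ker (eval z2) := heq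
    funext b
    have hmem : (X b - C (z1 b) : MvPolynomial σ ℝ) ∈ RingHom.ker (eval z2) := by
      rw [← heq']
      simp [RingHom.mem_ker]
    simp only [RingHom.mem_ker, map_sub, eval_X, eval_C, sub_eq_zero] at hmem
    exact hmem.symm

variable {n m l : ℕ}

/-- The KKT polynomial system `Ψ_α` in variables `(x, λ, μ)`. -/
noncomputable def KKTpoly (Pp Pq : MvPolynomial (Fin n) ℝ)
    (G : Fin m → MvPolynomial (Fin n) ℝ) (h : Fin l → ((Fin n → ℝ) →ᵃ[ℝ] ℝ))
    (α : Finset (Fin m)) :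
    (Fin n ⊕ ({i // i ∈ α} ⊕ Fin l)) → MvPolynomial (Fin n ⊕ ({i // i ∈ α} ⊕ Fin l)) ℝ
  | Sum.inl a =>
      rename Sum.inl (Pq * pderiv a Pp - Pp * pderiv a Pq)
      + ∑ i : {i // i ∈ α},
          X (Sum.inr (Sum.inl i)) * rename Sum.inl (pderiv a (G i))
      + ∑ j : Fin l, X (Sum.inr (Sum.inr j)) * C ((h j).linear (Pi.single a 1))
  | Sum.inr (Sum.inl i) => rename Sum.inl (G i)
  | Sum.inr (Sum.inr j) =>
      (∑ a : Fin n, C ((h j).linear (Pi.single a 1)) * X (Sum.inl a)) + C (h j 0)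

section eval

variable {p q : (Fin n → ℝ) → ℝ} {Pp Pq : MvPolynomial (Fin n) ℝ}
  {g : Fin m → (Fin n → ℝ) → ℝ} {G : Fin m → MvPolynomial (Fin n) ℝ}
  (h : Fin l → ((Fin n → ℝ) →ᵃ[ℝ] ℝ))

theorem grad_poly (hpf : p = fun y => eval y Pp) (x : Fin n → ℝ) (a : Fin n) :
    grad p x a = eval x (pderiv a Pp) := by
  rw [hpf]; exact grad_eval _ x a

theorem fracMap_poly (hpf : p = fun y => eval y Pp) (hqf : q = fun y => eval y Pq)
    (x : Fin n → ℝ) (a : Fin n) :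
    fracMap p q x a = eval x (Pq * pderiv a Pp - Pp * pderiv a Pq) := by
  simp only [fracMap, hpf, hqf, grad_eval, map_sub, _root_.map_mul]

theorem jac_fracMap_poly (hpf : p = fun y => eval y Pp) (hqf : q = fun y => eval y Pq)
    (x : Fin n → ℝ) (a b : Fin n) :
    jac (fracMap p q) x a b = eval x (pderiv b (Pq * pderiv a Pp - Pp * pderiv a Pq)) := by
  have hfun : (fun y => fracMap p q y a) =
      fun y => eval y (Pq * pderiv a Pp - Pp * pderiv a Pq) := by
    funext y; exact fracMap_poly hpf hqf y a
  show fderiv ℝ (fun y => fracMap p q y a) x (Pi.single b 1) = _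
  rw [hfun]
  exact grad_eval _ x b

theorem hess_poly {f : (Fin n → ℝ) → ℝ} {Pf : MvPolynomial (Fin n) ℝ}
    (hff : f = fun y => eval y Pf) (x : Fin n → ℝ) (a b : Fin n) :
    hess f x a b = eval x (pderiv b (pderiv a Pf)) := by
  have hfun : (fun y => grad f y a) = fun y => eval y (pderiv a Pf) := by
    funext y; exact grad_poly hff y a
  show fderiv ℝ (fun y => grad f y a) x (Pi.single b 1) = _
  rw [hfun]
  exact grad_eval _ x b

theorem eval_KKT_inl (α : Finset (Fin m)) (hpf : p = fun y => eval y Pp)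
    (hqf : q = fun y => eval y Pq)
    (w : (Fin n ⊕ ({i // i ∈ α} ⊕ Fin l)) → ℝ) (a : Fin n)
    (hgf : ∀ i, g i = fun y => eval y (G i)) :
    eval w (KKTpoly Pp Pq G h α (Sum.inl a)) =
      fracMap p q (w ∘ Sum.inl) a
      + ∑ i : {i // i ∈ α}, w (Sum.inr (Sum.inl i)) * grad (g i) (w ∘ Sum.inl) a
      + ∑ j : Fin l, w (Sum.inr (Sum.inr j)) * (h j).linear (Pi.single a 1) := by
  simp only [KKTpoly, map_add, map_sum, _root_.map_mul, eval_X, eval_C, eval_rename]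
  rw [fracMap_poly hpf hqf]
  congr 1
  congr 1
  exact Finset.sum_congr rfl fun i _ => by rw [grad_poly (hgf i)]

theorem eval_KKT_g (α : Finset (Fin m))
    (w : (Fin n ⊕ ({i // i ∈ α} ⊕ Fin l)) → ℝ) (i : {i // i ∈ α})
    (hgf : ∀ i, g i = fun y => eval y (G i)) :
    eval w (KKTpoly Pp Pq G h α (Sum.inr (Sum.inl i))) = g i (w ∘ Sum.inl) := by
  simp only [KKTpoly, eval_rename]
  rw [hgf i]

theorem eval_KKT_h (α : Finset (Fin m))
    (w : (Fin n ⊕ ({i // i ∈ α} ⊕ Fin l)) → ℝ) (j : Fin l) :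
    eval w (KKTpoly Pp Pq G h α (Sum.inr (Sum.inr j))) = h j (w ∘ Sum.inl) := by
  simp only [KKTpoly, map_add, map_sum, _root_.map_mul, eval_X, eval_C]
  have hlin : (h j).linear (w ∘ Sum.inl) =
      ∑ a : Fin n, (h j).linear (Pi.single a 1) * w (Sum.inl a) := by
    rw [LinearMap.pi_apply_eq_sum_univ ((h j).linear) (w ∘ Sum.inl)]
    refine Finset.sum_congr rfl fun a _ => ?_
    rw [smul_eq_mul, mul_comm]
    congr 2
    funext a'
    simp [Pi.single_apply, eq_comm]
  have hdec : h j (w ∘ Sum.inl) = (h j).linear (w ∘ Sum.inl) + h j 0 :=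
    congrFun (h j).decomp (w ∘ Sum.inl)
  rw [hdec, hlin]

end eval

section jacobian

variable {p q : (Fin n → ℝ) → ℝ} {Pp Pq : MvPolynomial (Fin n) ℝ}
  {g : Fin m → (Fin n → ℝ) → ℝ} {G : Fin m → MvPolynomial (Fin n) ℝ}
  (h : Fin l → ((Fin n → ℝ) →ᵃ[ℝ] ℝ))

theorem jac_KKT (α : Finset (Fin m)) (hpf : p = fun y => eval y Pp)
    (hqf : q = fun y => eval y Pq) (hgf : ∀ i, g i = fun y => eval y (G i))
    (hgrad_h : ∀ j x a, grad (⇑(h j)) x a = (h j).linear (Pi.single a 1))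
    (w : (Fin n ⊕ ({i // i ∈ α} ⊕ Fin l)) → ℝ) :
    (Matrix.of fun r s => eval w (pderiv s (KKTpoly Pp Pq G h α r))) =
      DPsi p q g h α (w ∘ Sum.inl) (fun i => w (Sum.inr (Sum.inl i))) := by
  have hren : ∀ (R : MvPolynomial (Fin n) ℝ) (b : Fin n),
      pderiv (Sum.inl b : Fin n ⊕ ({i // i ∈ α} ⊕ Fin l)) (rename Sum.inl R) =
        rename Sum.inl (pderiv b R) := fun R b => pderiv_rename Sum.inl_injective b R
  have hren0 : ∀ (R : MvPolynomial (Fin n) ℝ) (c : {i // i ∈ α} ⊕ Fin l),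
      pderiv (Sum.inr c) (rename (Sum.inl : Fin n → Fin n ⊕ ({i // i ∈ α} ⊕ Fin l)) R) = 0 :=
    fun R c => pderiv_rename_ne _ _ (fun s => Sum.inl_ne_inr) R
  ext r s
  cases r with
  | inl a =>
    cases s with
    | inl b =>
      simp only [Matrix.of_apply, KKTpoly, DPsi, map_add, map_sum, pderiv_mul, hren, hren0,
        pderiv_X, pderiv_C, Pi.single_apply, mul_zero, zero_mul, add_zero, zero_add,
        reduceCtorEq, if_false, ite_mul, Finset.sum_const_zero, eval_rename,
        _root_.map_mul, eval_X, map_zero]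
      rw [jac_fracMap_poly hpf hqf]
      congr 1
      exact Finset.sum_congr rfl fun i _ => by rw [hess_poly (hgf i)]
    | inr c =>
      cases c with
      | inl i' =>
        simp only [Matrix.of_apply, KKTpoly, DPsi, map_add, map_sum, pderiv_mul, hren, hren0,
          pderiv_X, pderiv_C, Pi.single_apply, Sum.inr.injEq, Sum.inl.injEq,
          mul_zero, zero_mul, add_zero, zero_add, reduceCtorEq, if_false, ite_mul, one_mul,
          Finset.sum_const_zero, Finset.sum_ite_eq', Finset.mem_univ, if_true,
          eval_rename, _root_.map_mul, eval_X, map_zero]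
        rw [grad_poly (hgf i')]
      | inr j' =>
        simp only [Matrix.of_apply, KKTpoly, DPsi, map_add, map_sum, pderiv_mul, hren, hren0,
          pderiv_X, pderiv_C, Pi.single_apply, Sum.inr.injEq, Sum.inl.injEq,
          mul_zero, zero_mul, add_zero, zero_add, reduceCtorEq, if_false, ite_mul, one_mul,
          Finset.sum_const_zero, Finset.sum_ite_eq', Finset.mem_univ, if_true,
          eval_rename, _root_.map_mul, eval_X, eval_C, map_zero]
        rw [hgrad_h j']
  | inr ri =>
    cases ri with
    | inl i =>
      cases s with
      | inl b =>
        simp only [Matrix.of_apply, KKTpoly, DPsi, hren, eval_rename]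
        rw [grad_poly (hgf i)]
      | inr c =>
        simp only [Matrix.of_apply, KKTpoly, DPsi, hren0, map_zero]
    | inr j =>
      cases s with
      | inl b =>
        simp only [Matrix.of_apply, KKTpoly, DPsi, map_add, map_sum, pderiv_mul,
          pderiv_X, pderiv_C, Pi.single_apply, Sum.inl.injEq,
          mul_zero, zero_mul, add_zero, zero_add, reduceCtorEq, if_false, mul_ite, mul_one,
          Finset.sum_const_zero, Finset.sum_ite_eq', Finset.mem_univ, if_true,
          eval_C, map_zero]
        rw [hgrad_h j]
      | inr c =>
        simp only [Matrix.of_apply, KKTpoly, DPsi, map_add, map_sum, pderiv_mul,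
          pderiv_X, pderiv_C, Pi.single_apply,
          mul_zero, zero_mul, add_zero, zero_add, reduceCtorEq, if_false, mul_ite, mul_one,
          Finset.sum_const_zero, eval_C, map_zero]

end jacobian

end StatAux

/-- For `K = {x : gᵢ(x) ≤ 0, hⱼ(x) = 0}` with `gᵢ` convex polynomial and
`hⱼ` affine, `p, q` polynomials with `q > 0` on `K` and `f = p/q`, the Abadie
constraint qualification holding on `K`, and `DΨ_α` of full rank `n + |α| + ℓ`
everywhere for every `α ⊆ [m]`, the set of stationary points
`Stat(K, f) = Sol(K, q∇p - p∇q)` has finitely many points. -/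
theorem stationary_points_finite_of_full_rank {n m l : ℕ}
    (g : Fin m → (Fin n → ℝ) → ℝ)
    (hgpoly : ∀ i, ∃ P : MvPolynomial (Fin n) ℝ, ∀ x, g i x = MvPolynomial.eval x P)
    (hgconv : ∀ i, ConvexOn ℝ Set.univ (g i))
    (h : Fin l → ((Fin n → ℝ) →ᵃ[ℝ] ℝ))
    (p q : (Fin n → ℝ) → ℝ)
    (hp : ∃ P : MvPolynomial (Fin n) ℝ, ∀ x, p x = MvPolynomial.eval x P)
    (hq : ∃ P : MvPolynomial (Fin n) ℝ, ∀ x, q x = MvPolynomial.eval x P)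
    (K : Set (Fin n → ℝ))
    (hK : K = {x | (∀ i, g i x ≤ 0) ∧ ∀ j, h j x = 0})
    (hqpos : ∀ x ∈ K, 0 < q x)
    (ACQ : ∀ x ∈ K, bouligandTangentCone K x = linCone g h x)
    (hrank : ∀ (α : Finset (Fin m)) (x : Fin n → ℝ) (lam : {i // i ∈ α} → ℝ),
      (DPsi p q g h α x lam).rank = n + α.card + l) :
    Set.Finite {x ∈ K | ∀ y ∈ K, 0 ≤ ∑ i, fracMap p q x i * (y i - x i)} := by
  classical
  obtain ⟨Pp, hPp⟩ := hp
  obtain ⟨Pq, hPq⟩ := hq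
  choose G hG using hgpoly
  have hpf : p = fun x => MvPolynomial.eval x Pp := funext hPp
  have hqf : q = fun x => MvPolynomial.eval x Pq := funext hPq
  have hgf : ∀ i, g i = fun x => MvPolynomial.eval x (G i) := fun i => funext (hG i)
  have hgradh : ∀ (j : Fin l) (x : Fin n → ℝ) (a : Fin n),
      grad (⇑(h j)) x a = (h j).linear (Pi.single a 1) :=
    fun j x a => StatAux.grad_affine (h j) x a
  -- the variational inequality extends to the tangent cone
  have hVI : ∀ x, x ∈ K → (∀ y ∈ K, 0 ≤ ∑ i, fracMap p q x i * (y i - x i)) →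
      ∀ v ∈ bouligandTangentCone K x, 0 ≤ ∑ i, fracMap p q x i * v i := by
    intro x hxK hx v hv
    obtain ⟨y, t, hyK, ht, hyx, ht0, hvlim⟩ := hv
    have hcont : Continuous fun w : Fin n → ℝ => ∑ i, fracMap p q x i * w i :=
      continuous_finset_sum _ fun i _ => continuous_const.mul (continuous_apply i)
    have hlim : Tendsto (fun k => ∑ i, fracMap p q x i * ((t k)⁻¹ • (y k - x)) i)
        atTop (nhds (∑ i, fracMap p q x i * v i)) := (hcont.tendsto v).comp hvlim
    refine le_of_tendsto_of_tendsto tendsto_const_nhds hlim ?_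
    filter_upwards with k
    have h1 : 0 ≤ ∑ i, fracMap p q x i * (y k i - x i) := hx (y k) (hyK k)
    have heq : ∑ i, fracMap p q x i * ((t k)⁻¹ • (y k - x)) i
        = (t k)⁻¹ * ∑ i, fracMap p q x i * (y k i - x i) := by
      rw [Finset.mul_sum]
      refine Finset.sum_congr rfl fun i _ => ?_
      simp only [Pi.smul_apply, Pi.sub_apply, smul_eq_mul]
      ring
    show (0:ℝ) ≤ ∑ i, fracMap p q x i * ((t k)⁻¹ • (y k - x)) i
    rw [heq]
    exact mul_nonneg (inv_nonneg.mpr (ht k).le) h1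
  -- inclusion into the union of the zero sets of the KKT systems
  have hsub : {x ∈ K | ∀ y ∈ K, 0 ≤ ∑ i, fracMap p q x i * (y i - x i)} ⊆
      ⋃ α : Finset (Fin m),
        (fun w : (Fin n ⊕ ({i // i ∈ α} ⊕ Fin l)) → ℝ => w ∘ Sum.inl) ''
          {w | ∀ s, MvPolynomial.eval w (StatAux.KKTpoly Pp Pq G h α s) = 0} := by
    intro x hx
    obtain ⟨hxK, hxVI⟩ := hx
    set α : Finset (Fin m) := Finset.univ.filter (fun i => g i x = 0) with hα
    set u : ({i // i ∈ α} ⊕ Fin l) → (Fin n → ℝ) :=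
      Sum.elim (fun i => grad (g i) x) (fun j => grad (⇑(h j)) x) with hu
    have hlin_of : ∀ v : Fin n → ℝ, (∀ s, ∑ j, u s j * v j = 0) → v ∈ linCone g h x := by
      intro v hv
      constructor
      · intro i hgi
        have hiα : i ∈ α := by simp [hα, hgi]
        have := hv (Sum.inl ⟨i, hiα⟩)
        simp only [hu, Sum.elim_inl] at this
        exact le_of_eq this
      · intro j'
        have := hv (Sum.inr j')
        simpa [hu] using this
    have hdot : ∀ v : Fin n → ℝ, (∀ s, ∑ j, u s j * v j = 0) →
        ∑ j, fracMap p q x j * v j = 0 := by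
      intro v hv
      have hvneg : ∀ s, ∑ j, u s j * (-v) j = 0 := by
        intro s
        have := hv s
        simp only [Pi.neg_apply, mul_neg]
        rw [Finset.sum_neg_distrib, this, neg_zero]
      have h1 : 0 ≤ ∑ j, fracMap p q x j * v j := by
        apply hVI x hxK hxVI
        rw [ACQ x hxK]
        exact hlin_of v hv
      have h2 : 0 ≤ ∑ j, fracMap p q x j * (-v) j := by
        apply hVI x hxK hxVI
        rw [ACQ x hxK]
        exact hlin_of (-v) hvneg
      have h2' : ∑ j, fracMap p q x j * (-v) j = -∑ j, fracMap p q x j * v j := by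
        simp [mul_neg]
      rw [h2'] at h2
      linarith
    obtain ⟨c, hc⟩ := StatAux.mem_span_of_dot (fracMap p q x) u hdot
    set lam : {i // i ∈ α} → ℝ := fun i => -c (Sum.inl i) with hlam
    set mu : Fin l → ℝ := fun j => -c (Sum.inr j) with hmu
    set w : (Fin n ⊕ ({i // i ∈ α} ⊕ Fin l)) → ℝ := Sum.elim x (Sum.elim lam mu) with hwdef
    have hwx : w ∘ Sum.inl = x := rfl
    refine Set.mem_iUnion.mpr ⟨α, ⟨w, ?_, hwx⟩⟩
    intro s
    rcases s with a | i | j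
    · rw [StatAux.eval_KKT_inl h α hpf hqf w a hgf, hwx]
      have hca : ∑ i : {i // i ∈ α}, c (Sum.inl i) * grad (g i) x a
          + ∑ j : Fin l, c (Sum.inr j) * (h j).linear (Pi.single a 1)
          = fracMap p q x a := by
        have hf := congrFun hc a
        rw [Finset.sum_apply] at hf
        rw [Fintype.sum_sum_type] at hf
        simpa [hu, hgradh, smul_eq_mul] using hf
      have hw1 : ∀ i : {i // i ∈ α}, w (Sum.inr (Sum.inl i)) = -c (Sum.inl i) := fun i => rfl
      have hw2 : ∀ j : Fin l, w (Sum.inr (Sum.inr j)) = -c (Sum.inr j) := fun j => rfl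
      simp only [hw1, hw2, neg_mul]
      rw [Finset.sum_neg_distrib, Finset.sum_neg_distrib]
      linarith [hca]
    · rw [StatAux.eval_KKT_g h α w i hgf, hwx]
      exact (Finset.mem_filter.mp i.2).2
    · rw [StatAux.eval_KKT_h h α w j, hwx]
      rw [hK] at hxK
      exact hxK.2 j
  refine Set.Finite.subset (Set.finite_iUnion fun α => Set.Finite.image _
    (StatAux.finite_zeros _ ?_)) hsub
  intro z _
  rw [StatAux.jac_KKT h α hpf hqf hgf hgradh z]
  rw [hrank α (z ∘ Sum.inl) (fun i => z (Sum.inr (Sum.inl i)))]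
  simp [Fintype.card_sum, Fintype.card_coe, add_assoc]
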